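/- Let (M, φ, ξ, η, g) be a nearly Sasakian manifold with h defined by ∇_X ξ = −φX + hX, and fix a real number r. Then there exists a unique linear connection ∇̄ on M with ∇̄φ = 0, ∇̄ξ = 0, ∇̄η = 0, ∇̄g = 0 whose torsion T̄ satisfies: (1) T̄ is totally skew-symmetric on the distribution D = ker(η), i.e. g(T̄(X,Y),Z) is skew-symmetric in X, Y, Z ∈ D; and (2) the (1,1)-tensor τ defined by τX = T̄(ξ, X) satisfies τφ + φτ = −2(r+1)φ². This connection is ∇̄_X Y = ∇_X Y + H(X,Y) with H(X,Y) = (1/2)(∇_X φ)φY − r η(X)φY + η(Y)(φ − h)X − (1/2)g((φ − h)X, Y)ξ. -/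
import Mathlib


/-!
An algebraic model of the differential calculus on a (parallelizable) smooth
manifold: `M` is the type of points, `V` is the model for the tangent spaces,
smooth functions are modelled by maps `M → ℝ` and vector fields by maps
`M → V`.  The data consists of the directional derivative `D` of functions,
the Lie bracket `lie` of vector fields, a Riemannian metric `g` and its
Levi-Civita connection `nabla` (characterized, as usual, by being the unique
metric torsion-free connection).
-/

noncomputable section

structure RGeo (M V : Type) [AddCommGroup V] [Module ℝ V] : Type where
  D : (M → V) → (M → ℝ) → (M → ℝ)
  lie : (M → V) → (M → V) → (M → V)
  g : M → V →ₗ[ℝ] V →ₗ[ℝ] ℝ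
  nabla : (M → V) → (M → V) → (M → V)
  g_symm : ∀ x u v, g x u v = g x v u
  g_posdef : ∀ x (v : V), v ≠ 0 → 0 < g x v v
  D_add_fun : ∀ X f₁ f₂, D X (f₁ + f₂) = D X f₁ + D X f₂
  D_mul_fun : ∀ X f₁ f₂, D X (f₁ * f₂) = f₁ * D X f₂ + f₂ * D X f₁
  D_const : ∀ X (c : ℝ), D X (fun _ => c) = 0
  D_add_vf : ∀ X Y f, D (X + Y) f = D X f + D Y f
  D_smul_vf : ∀ (f : M → ℝ) X φ, D (fun x => f x • X x) φ = f * D X φ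
  lie_antisymm : ∀ X Y, lie X Y = -(lie Y X)
  lie_add_left : ∀ X Y Z, lie (X + Y) Z = lie X Z + lie Y Z
  lie_leibniz : ∀ X (f : M → ℝ) Y,
    lie X (fun x => f x • Y x) = fun x => D X f x • Y x + f x • lie X Y x
  D_lie : ∀ X Y f, D (lie X Y) f = D X (D Y f) - D Y (D X f)
  nabla_add_left : ∀ X Y Z, nabla (X + Y) Z = nabla X Z + nabla Y Z
  nabla_smul_left : ∀ (f : M → ℝ) X Y,
    nabla (fun x => f x • X x) Y = fun x => f x • nabla X Y x
  nabla_add_right : ∀ X Y Z, nabla X (Y + Z) = nabla X Y + nabla X Z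
  nabla_leibniz : ∀ X (f : M → ℝ) Y,
    nabla X (fun x => f x • Y x) = fun x => D X f x • Y x + f x • nabla X Y x
  torsion_free : ∀ X Y, (fun x => nabla X Y x - nabla Y X x) = lie X Y
  metric_compat : ∀ X Y Z,
    D X (fun x => g x (Y x) (Z x)) =
      fun x => g x (nabla X Y x) (Z x) + g x (Y x) (nabla X Z x)

namespace RGeo

variable {M V : Type} [AddCommGroup V] [Module ℝ V]

/-- The metric evaluated on two vector fields. -/
def gf (Γ : RGeo M V) (X Y : M → V) : M → ℝ := fun x => Γ.g x (X x) (Y x)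

/-- Application of a `(1,1)`-tensor field to a vector field. -/
def tapp (A : M → V →ₗ[ℝ] V) (X : M → V) : M → V := fun x => A x (X x)

/-- The covariant derivative `(∇_X A) Y` of a `(1,1)`-tensor field `A`. -/
def covDer (Γ : RGeo M V) (A : M → V →ₗ[ℝ] V) (X Y : M → V) : M → V :=
  fun x => Γ.nabla X (tapp A Y) x - A x (Γ.nabla X Y x)

/-- The constant vector field with value `v`. -/
def cst (M : Type) {V : Type} [AddCommGroup V] [Module ℝ V] (v : V) : M → V := fun _ => v

/-- The Riemann curvature operator `R(X,Y)Z`. -/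
def curv (Γ : RGeo M V) (X Y Z : M → V) : M → V :=
  fun x => Γ.nabla X (Γ.nabla Y Z) x - Γ.nabla Y (Γ.nabla X Z) x - Γ.nabla (Γ.lie X Y) Z x

/-- A family of vectors is orthonormal at the point `x`. -/
def OrthonormalAt (Γ : RGeo M V) (x : M) {n : ℕ} (e : Fin n → V) : Prop :=
  ∀ i j, Γ.g x (e i) (e j) = if i = j then (1 : ℝ) else 0

/-- The Ricci tensor at `x`, computed with respect to a frame orthonormal at `x`. -/
def ricciAt (Γ : RGeo M V) (x : M) {n : ℕ} (e : Fin n → V) (u v : V) : ℝ :=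
  ∑ i, Γ.g x (curv Γ (cst M (e i)) (cst M u) (cst M v) x) (e i)

/-- The scalar curvature at `x`, computed with respect to a frame orthonormal at `x`. -/
def scalarAt (Γ : RGeo M V) (x : M) {n : ℕ} (e : Fin n → V) : ℝ :=
  ∑ i, ∑ j, Γ.g x (curv Γ (cst M (e i)) (cst M (e j)) (cst M (e j)) x) (e i)

/-- Exterior derivative of a 1-form (given by its values on vector fields). -/
def dOne (Γ : RGeo M V) (a : (M → V) → M → ℝ) (X Y : M → V) : M → ℝ :=
  Γ.D X (a Y) - Γ.D Y (a X) - a (Γ.lie X Y)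

/-- Exterior derivative of a 2-form (given by its values on vector fields). -/
def dTwo (Γ : RGeo M V) (ω : (M → V) → (M → V) → M → ℝ) (X Y Z : M → V) : M → ℝ :=
  Γ.D X (ω Y Z) - Γ.D Y (ω X Z) + Γ.D Z (ω X Y)
    - ω (Γ.lie X Y) Z + ω (Γ.lie X Z) Y - ω (Γ.lie Y Z) X

/-- Exterior derivative of a 3-form (given by its values on vector fields). -/
def dThree (Γ : RGeo M V) (c : (M → V) → (M → V) → (M → V) → M → ℝ)
    (X Y Z W : M → V) : M → ℝ :=
  Γ.D X (c Y Z W) - Γ.D Y (c X Z W) + Γ.D Z (c X Y W) - Γ.D W (c X Y Z)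
    - c (Γ.lie X Y) Z W + c (Γ.lie X Z) Y W - c (Γ.lie X W) Y Z
    - c (Γ.lie Y Z) X W + c (Γ.lie Y W) X Z - c (Γ.lie Z W) X Y

/-- Wedge product of a 1-form and a 2-form, on vector fields. -/
def w12 (a : (M → V) → M → ℝ) (b : (M → V) → (M → V) → M → ℝ)
    (X Y Z : M → V) : M → ℝ :=
  a X * b Y Z - a Y * b X Z + a Z * b X Y

/-- Wedge product of two 2-forms, on vector fields. -/
def w22 (b c : (M → V) → (M → V) → M → ℝ) (X Y Z W : M → V) : M → ℝ :=
  b X Y * c Z W - b X Z * c Y W + b X W * c Y Z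
    + b Y Z * c X W - b Y W * c X Z + b Z W * c X Y

/-- An almost contact metric structure `(φ, ξ, η, g)`. -/
structure ACMS (Γ : RGeo M V) : Type where
  phi : M → V →ₗ[ℝ] V
  xi : M → V
  eta : M → V →ₗ[ℝ] ℝ
  phi_sq : ∀ x (v : V), phi x (phi x v) = -v + eta x v • xi x
  eta_xi : ∀ x, eta x (xi x) = 1
  metric_phi : ∀ x (u v : V),
    Γ.g x (phi x u) (phi x v) = Γ.g x u v - eta x u * eta x v

variable {Γ : RGeo M V}

/-- `η` evaluated on vector fields. -/
def ACMS.etaf (S : ACMS Γ) : (M → V) → M → ℝ := fun X x => S.eta x (X x)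

/-- `φ` applied to a vector field. -/
def ACMS.phif (S : ACMS Γ) : (M → V) → M → V := fun X x => S.phi x (X x)

/-- The fundamental 2-form `Φ(X,Y) = g(φX, Y)`, on vector fields. -/
def ACMS.omegaf (S : ACMS Γ) : (M → V) → (M → V) → M → ℝ :=
  fun X Y x => Γ.g x (S.phi x (X x)) (Y x)

/-- Nearly Sasakian structure: `(∇_X φ)Y + (∇_Y φ)X = 2g(X,Y)ξ − η(X)Y − η(Y)X`. -/
def ACMS.IsNearlySasakian (S : ACMS Γ) : Prop :=
  ∀ X Y : M → V, ∀ x,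
    covDer Γ S.phi X Y x + covDer Γ S.phi Y X x
      = (2 * Γ.g x (X x) (Y x)) • S.xi x - S.eta x (X x) • Y x - S.eta x (Y x) • X x

/-- Sasakian structure: `(∇_X φ)Y = g(X,Y)ξ − η(Y)X`. -/
def ACMS.IsSasakian (S : ACMS Γ) : Prop :=
  ∀ X Y : M → V, ∀ x,
    covDer Γ S.phi X Y x = Γ.g x (X x) (Y x) • S.xi x - S.eta x (Y x) • X x

/-- Nearly cosymplectic structure: `(∇_X φ)Y + (∇_Y φ)X = 0`. -/
def ACMS.IsNearlyCosymplectic (S : ACMS Γ) : Prop :=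
  ∀ X Y : M → V, ∀ x, covDer Γ S.phi X Y x + covDer Γ S.phi Y X x = 0

/-- coKähler structure: `∇φ = 0`. -/
def ACMS.IsCoKaehler (S : ACMS Γ) : Prop :=
  ∀ X Y : M → V, ∀ x, covDer Γ S.phi X Y x = 0

/-- Nearly α-Sasakian structure. -/
def ACMS.IsNearlyAlphaSasakian (S : ACMS Γ) (α : ℝ) : Prop :=
  ∀ X Y : M → V, ∀ x,
    covDer Γ S.phi X Y x + covDer Γ S.phi Y X x
      = α • ((2 * Γ.g x (X x) (Y x)) • S.xi x - S.eta x (X x) • Y x - S.eta x (Y x) • X x)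

/-- `h` is the tensor of the nearly Sasakian structure `S`: `∇_X ξ = −φX + hX`. -/
def ACMS.IsNSTensor (S : ACMS Γ) (h : M → V →ₗ[ℝ] V) : Prop :=
  ∀ X : M → V, ∀ x, Γ.nabla X S.xi x = -(S.phi x (X x)) + h x (X x)

/-- `h` is the tensor of the nearly cosymplectic structure `S`: `∇_X ξ = hX`. -/
def ACMS.IsNCTensor (S : ACMS Γ) (h : M → V →ₗ[ℝ] V) : Prop :=
  ∀ X : M → V, ∀ x, Γ.nabla X S.xi x = h x (X x)

/-- A vector field is a section of a distribution. -/
def Sect (Dst : M → Submodule ℝ V) (X : M → V) : Prop := ∀ x, X x ∈ Dst x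

/-- A distribution is integrable (involutive). -/
def IsIntegrable (Γ : RGeo M V) (Dst : M → Submodule ℝ V) : Prop :=
  ∀ X Y, Sect Dst X → Sect Dst Y → Sect Dst (Γ.lie X Y)

/-- A distribution defines a totally geodesic foliation: it is closed under
covariant differentiation along its own sections. -/
def IsTotallyGeodesic (Γ : RGeo M V) (Dst : M → Submodule ℝ V) : Prop :=
  ∀ X Y, Sect Dst X → Sect Dst Y → Sect Dst (Γ.nabla X Y)

/-- The eigendistribution of `h²` for the eigenvalue `μ`. -/
def eigD (h : M → V →ₗ[ℝ] V) (μ : ℝ) : M → Submodule ℝ V :=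
  fun x => Module.End.eigenspace (h x ∘ₗ h x) μ

/-- `(i,j,k)` is an even permutation of `(1,2,3)` (here of `(0,1,2)`). -/
def EvenPerm (i j k : Fin 3) : Prop :=
  (i, j, k) = (0, 1, 2) ∨ (i, j, k) = (1, 2, 0) ∨ (i, j, k) = (2, 0, 1)

/-- An `SU(2)`-structure on a 5-manifold, described by three almost contact
metric structures sharing `ξ`, `η`, `g` and satisfying the quaternionic
relations `φᵢφⱼ = φₖ = −φⱼφᵢ` for even permutations `(i,j,k)`. -/
structure SU2Triple (Γ : RGeo M V) : Type where
  S : Fin 3 → ACMS Γ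
  same_xi : ∀ i j, (S i).xi = (S j).xi
  same_eta : ∀ i j, (S i).eta = (S j).eta
  quat : ∀ i j k, EvenPerm i j k → ∀ x (v : V),
    (S i).phi x ((S j).phi x v) = (S k).phi x v ∧
    (S j).phi x ((S i).phi x v) = -((S k).phi x v)

/-- The tensor field `N_φ = [φ,φ] + dη ⊗ ξ`. -/
def nijenhuis (Γ : RGeo M V) (A : M → V →ₗ[ℝ] V) (eta : M → V →ₗ[ℝ] ℝ) (xi : M → V)
    (X Y : M → V) : M → V :=
  fun x => A x (A x (Γ.lie X Y x)) + Γ.lie (tapp A X) (tapp A Y) x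
    - A x (Γ.lie (tapp A X) Y x) - A x (Γ.lie X (tapp A Y) x)
    + dOne Γ (fun Z y => eta y (Z y)) X Y x • xi x

/-- Pointwise wedge product of two 2-forms on `V`, evaluated on four vectors. -/
def wedge22At (b c : V →ₗ[ℝ] V →ₗ[ℝ] ℝ) (p q r s : V) : ℝ :=
  b p q * c r s - b p r * c q s + b p s * c q r
    + b q r * c p s - b q s * c p r + b r s * c p q

/-- Pointwise wedge product of a 4-form and a 1-form on `V`, on five vectors. -/
def wedge41At (v4 : V → V → V → V → ℝ) (a : V →ₗ[ℝ] ℝ) (p q r s t : V) : ℝ :=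
  a p * v4 q r s t - a q * v4 p r s t + a r * v4 p q s t
    - a s * v4 p q r t + a t * v4 p q r s

end RGeo

/-- The data `(η, ω₁, ω₂, ω₃)` of a candidate `SU(2)`-structure on a 5-manifold:
a 1-form and three 2-forms (given pointwise). -/
structure SU2Forms (M V : Type) [AddCommGroup V] [Module ℝ V] : Type where
  eta : M → V →ₗ[ℝ] ℝ
  omega : Fin 3 → M → V →ₗ[ℝ] V →ₗ[ℝ] ℝ
  omega_alt : ∀ i x v, omega i x v v = 0

namespace SU2Forms

variable {M V : Type} [AddCommGroup V] [Module ℝ V]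

/-- `(η, ω₁, ω₂, ω₃)` is an `SU(2)`-structure: `ωᵢ ∧ ωⱼ = δᵢⱼ v` for a 4-form
`v` with `v ∧ η ≠ 0`, and `X⌟ω₁ = Y⌟ω₂` implies `ω₃(X,Y) ≥ 0`. -/
def IsSU2 (F : SU2Forms M V) : Prop :=
  (∃ v4 : M → V → V → V → V → ℝ,
    (∀ i j x p q r s, RGeo.wedge22At (F.omega i x) (F.omega j x) p q r s
        = (if i = j then (1 : ℝ) else 0) * v4 x p q r s) ∧
    (∀ x, ∃ p q r s t, RGeo.wedge41At (v4 x) (F.eta x) p q r s t ≠ 0)) ∧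
  (∀ x (u w : V), (∀ z, F.omega 0 x u z = F.omega 1 x w z) → 0 ≤ F.omega 2 x u w)

/-- `η` evaluated on vector fields. -/
def etaf (F : SU2Forms M V) : (M → V) → M → ℝ := fun X x => F.eta x (X x)

/-- `ωᵢ` evaluated on vector fields. -/
def omegaf (F : SU2Forms M V) (i : Fin 3) : (M → V) → (M → V) → M → ℝ :=
  fun X Y x => F.omega i x (X x) (Y x)

end SU2Forms

namespace RGeo

variable {M V : Type} [AddCommGroup V] [Module ℝ V]

/-- A linear connection on `(M, V, Γ)`. -/
structure ConnOf (Γ : RGeo M V) : Type where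
  nb : (M → V) → (M → V) → (M → V)
  nb_add_left : ∀ X Y Z, nb (X + Y) Z = nb X Z + nb Y Z
  nb_smul_left : ∀ (f : M → ℝ) X Y, nb (fun x => f x • X x) Y = fun x => f x • nb X Y x
  nb_add_right : ∀ X Y Z, nb X (Y + Z) = nb X Y + nb X Z
  nb_leibniz : ∀ X (f : M → ℝ) Y,
    nb X (fun x => f x • Y x) = fun x => Γ.D X f x • Y x + f x • nb X Y x

/-- The torsion of a linear connection. -/
def ConnOf.tors {Γ : RGeo M V} (C : ConnOf Γ) (X Y : M → V) : M → V :=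
  fun x => C.nb X Y x - C.nb Y X x - Γ.lie X Y x

/-- The connection parallelizes all the structure tensors `g`, `ξ`, `φ`, `η`. -/
def ConnOf.Parallelizes {Γ : RGeo M V} (C : ConnOf Γ) (S : ACMS Γ) : Prop :=
  (∀ X Y Z, Γ.D X (Γ.gf Y Z)
      = fun x => Γ.g x (C.nb X Y x) (Z x) + Γ.g x (Y x) (C.nb X Z x)) ∧
  (∀ X x, C.nb X S.xi x = 0) ∧
  (∀ X Y x, C.nb X (tapp S.phi Y) x = S.phi x (C.nb X Y x)) ∧
  (∀ X Y, Γ.D X (S.etaf Y) = fun x => S.eta x (C.nb X Y x))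

end RGeo

namespace RGeo

variable {M V : Type} [AddCommGroup V] [Module ℝ V]

/-- The conditions of the canonical connection of a nearly Sasakian manifold:
it parallelizes all the structure tensors, its torsion is totally
skew-symmetric on `D = ker η`, and the tensor `τX = T̄(ξ,X)` satisfies
`τφ + φτ = −2(r+1)φ²`. -/
def IsCanonicalConn (Γ : RGeo M V) (S : ACMS Γ) (r : ℝ) (C : ConnOf Γ) : Prop :=
  C.Parallelizes S ∧
  (∀ X Y Z : M → V, Sect (fun x => LinearMap.ker (S.eta x)) X →
    Sect (fun x => LinearMap.ker (S.eta x)) Y →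
    Sect (fun x => LinearMap.ker (S.eta x)) Z → ∀ x,
      Γ.g x (C.tors X Y x) (Z x) = -(Γ.g x (C.tors X Z x) (Y x))) ∧
  (∀ X : M → V, ∀ x,
    C.tors S.xi (tapp S.phi X) x + S.phi x (C.tors S.xi X x)
      = (-(2 * (r + 1))) • S.phi x (S.phi x (X x)))

end RGeo

namespace NSCanon
open RGeo

variable {M V : Type} [AddCommGroup V] [Module ℝ V]

lemma g_zero' (Γ : RGeo M V) {x : M} {v : V} (hv : Γ.g x v v = 0) : v = 0 := by
  by_contra hne
  have h := Γ.g_posdef x v hne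
  rw [hv] at h
  exact lt_irrefl 0 h

lemma g_ext (Γ : RGeo M V) {x : M} {v w : V} (hvw : ∀ c, Γ.g x v c = Γ.g x w c) : v = w := by
  have h2 : Γ.g x (v - w) (v - w) = 0 := by
    have h3 := hvw (v - w)
    simp only [map_sub, LinearMap.sub_apply] at h3 ⊢
    linarith
  exact sub_eq_zero.mp (g_zero' Γ h2)

variable {Γ : RGeo M V} (S : ACMS Γ)

lemma phi_phi_xi (x : M) : S.phi x (S.phi x (S.xi x)) = 0 := by
  rw [S.phi_sq, S.eta_xi]; simp

/-- `g(u, φξ) = η u * η(φξ)` -/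
lemma g_phi_xi (x : M) (u : V) :
    Γ.g x u (S.phi x (S.xi x)) = S.eta x u * S.eta x (S.phi x (S.xi x)) := by
  have h1 := S.metric_phi x u (S.phi x (S.xi x))
  rw [phi_phi_xi] at h1
  simp only [map_zero] at h1
  linarith

/-- `g(u, ξ) = η u + η(φ u) * η(φ ξ)` -/
lemma g_xi_aux (x : M) (u : V) :
    Γ.g x u (S.xi x) = S.eta x u + S.eta x (S.phi x u) * S.eta x (S.phi x (S.xi x)) := by
  have h1 := S.metric_phi x u (S.xi x)
  rw [g_phi_xi] at h1
  rw [S.eta_xi] at h1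
  linarith

lemma eta_phi_aux (x : M) (u : V) :
    S.eta x (S.phi x u) = S.eta x (S.phi x (S.xi x)) * S.eta x u := by
  set t := S.eta x (S.phi x (S.xi x)) with ht
  have h1 := S.metric_phi x (S.phi x u) (S.phi x u)
  have h2 := S.metric_phi x u u
  rw [S.phi_sq] at h1
  have h3 := g_xi_aux S x u
  have h4 := g_xi_aux S x (S.xi x)
  rw [S.eta_xi] at h4
  have h5 : S.eta x (S.phi x (S.xi x)) = t := rfl
  rw [h5] at h4
  -- expand h1 LHS
  simp only [map_add, map_neg, map_smul, LinearMap.add_apply, LinearMap.neg_apply,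
    LinearMap.smul_apply, smul_eq_mul] at h1
  have hsym : Γ.g x (S.xi x) u = Γ.g x u (S.xi x) := Γ.g_symm x (S.xi x) u
  have hsq : (S.eta x (S.phi x u) - t * S.eta x u) ^ 2 = 0 := by
    linear_combination h1 + h2 + 2 * (S.eta x u) * h3 - (S.eta x u) ^ 2 * h4 + (S.eta x u) * hsym
  have := pow_eq_zero_iff (n := 2) (by norm_num) |>.mp hsq
  linarith

lemma eta_phi_xi (x : M) : S.eta x (S.phi x (S.xi x)) = 0 := by
  have h1 := eta_phi_aux S x (S.phi x (S.xi x))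
  rw [phi_phi_xi] at h1
  simp only [map_zero] at h1
  exact mul_self_eq_zero.mp h1.symm

lemma eta_phi (x : M) (u : V) : S.eta x (S.phi x u) = 0 := by
  rw [eta_phi_aux S x u, eta_phi_xi S]; ring

lemma g_xi (x : M) (u : V) : Γ.g x u (S.xi x) = S.eta x u := by
  rw [g_xi_aux S x u, eta_phi_xi S]; ring

lemma g_xi' (x : M) (u : V) : Γ.g x (S.xi x) u = S.eta x u := by
  rw [Γ.g_symm, g_xi S]

lemma g_xi_xi (x : M) : Γ.g x (S.xi x) (S.xi x) = 1 := by
  rw [g_xi S, S.eta_xi]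

lemma phi_xi (x : M) : S.phi x (S.xi x) = 0 := by
  apply g_zero' Γ
  have h1 := S.metric_phi x (S.xi x) (S.xi x)
  rw [g_xi_xi S, S.eta_xi] at h1
  linarith

lemma phi_skew (x : M) (u v : V) : Γ.g x (S.phi x u) v = -Γ.g x u (S.phi x v) := by
  have h1 := S.metric_phi x u (S.phi x v)
  rw [eta_phi S, S.phi_sq] at h1
  simp only [map_add, map_neg, map_smul, smul_eq_mul, mul_zero, sub_zero] at h1
  rw [g_xi S] at h1
  rw [eta_phi S] at h1
  linarith

end NSCanon
namespace NSCanon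
open RGeo

variable {M V : Type} [AddCommGroup V] [Module ℝ V]

/-- generic: an operator additive and function-linear in an argument is pointwise. -/
lemma tens_congr {T : (M → V) → M → V}
    (hadd : ∀ Y Z, T (Y + Z) = T Y + T Z)
    (hsmul : ∀ (f : M → ℝ) Y, T (fun y => f y • Y y) = fun y => f y • T Y y)
    {Y Y' : M → V} (x : M) (hy : Y x = Y' x) : T Y x = T Y' x := by
  classical
  have hdec : Y = Y' + fun y => (if y = x then (0:ℝ) else 1) • (Y y - Y' y) := by
    funext y
    by_cases hyx : y = x
    · subst hyx; simp [hy]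
    · simp [hyx]
  have h2 : T Y = T Y' + T (fun y => (if y = x then (0:ℝ) else 1) • (Y y - Y' y)) := by
    rw [← hadd]; exact congrArg T hdec
  have h3 := hsmul (fun y => if y = x then (0:ℝ) else 1) (fun y => Y y - Y' y)
  calc T Y x = T Y' x + T (fun y => (if y = x then (0:ℝ) else 1) • (Y y - Y' y)) x := by
        rw [h2]; rfl
    _ = T Y' x := by rw [h3]; simp

variable (Γ : RGeo M V)

lemma nabla_congr_left {X X' : M → V} (Y : M → V) (x : M) (hx : X x = X' x) :
    Γ.nabla X Y x = Γ.nabla X' Y x :=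
  tens_congr (T := fun W => Γ.nabla W Y) (fun a b => Γ.nabla_add_left a b Y)
    (fun f a => Γ.nabla_smul_left f a Y) x hx

lemma nb_congr_left (C : ConnOf Γ) {X X' : M → V} (Y : M → V) (x : M) (hx : X x = X' x) :
    C.nb X Y x = C.nb X' Y x :=
  tens_congr (T := fun W => C.nb W Y) (fun a b => C.nb_add_left a b Y)
    (fun f a => C.nb_smul_left f a Y) x hx

lemma nabla_zero_right (X : M → V) : Γ.nabla X (fun _ => (0:V)) = fun _ => (0:V) := by
  have h := Γ.nabla_leibniz X (fun _ => (0:ℝ)) (fun _ => (0:V))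
  have h0 : Γ.D X (fun _ => (0:ℝ)) = 0 := Γ.D_const X 0
  funext y
  have := congrFun h y
  simp only [zero_smul] at this
  rw [h0] at this
  simpa using this

lemma nabla_csmul_right (X Y : M → V) (c : ℝ) :
    Γ.nabla X (fun y => c • Y y) = fun y => c • Γ.nabla X Y y := by
  have h := Γ.nabla_leibniz X (fun _ => c) Y
  have h0 : Γ.D X (fun _ => c) = 0 := Γ.D_const X c
  funext y
  have := congrFun h y
  rw [h0] at this
  simpa using this

lemma nabla_add_right' (X Y Z : M → V) (x : M) :
    Γ.nabla X (fun y => Y y + Z y) x = Γ.nabla X Y x + Γ.nabla X Z x := by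
  have h := congrFun (Γ.nabla_add_right X Y Z) x
  exact h

lemma nabla_sub_right (X Y Z : M → V) (x : M) :
    Γ.nabla X (fun y => Y y - Z y) x = Γ.nabla X Y x - Γ.nabla X Z x := by
  have h1 : (fun y => Y y - Z y) = fun y => Y y + (-1:ℝ) • Z y := by
    funext y; simp [sub_eq_add_neg]
  rw [h1]
  have h2 := nabla_add_right' Γ X Y (fun y => (-1:ℝ) • Z y)
  have h3 := congrFun (nabla_csmul_right Γ X Z (-1)) x
  rw [show Γ.nabla X (fun y => Y y + (-1:ℝ) • Z y) x
      = Γ.nabla X Y x + Γ.nabla X (fun y => (-1:ℝ) • Z y) x from h2 x, h3]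
  simp [sub_eq_add_neg]

-- covDer lemmas
variable (A : M → V →ₗ[ℝ] V)

lemma tapp_add (Y Z : M → V) : tapp A (Y + Z) = fun y => tapp A Y y + tapp A Z y := by
  funext y; simp [tapp]

lemma tapp_smulfun (f : M → ℝ) (Y : M → V) :
    tapp A (fun y => f y • Y y) = fun y => f y • tapp A Y y := by
  funext y; simp [tapp]

lemma covDer_add_right (X Y Z : M → V) :
    covDer Γ A X (Y + Z) = covDer Γ A X Y + covDer Γ A X Z := by
  funext y
  simp only [covDer, tapp_add, Pi.add_apply]
  have h1 := nabla_add_right' Γ X (tapp A Y) (tapp A Z) y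
  have h2 := congrFun (Γ.nabla_add_right X Y Z) y
  rw [h1, h2]
  simp only [Pi.add_apply, map_add]
  abel

lemma covDer_smulfun_right (X : M → V) (f : M → ℝ) (Y : M → V) :
    covDer Γ A X (fun y => f y • Y y) = fun y => f y • covDer Γ A X Y y := by
  funext y
  simp only [covDer, tapp_smulfun]
  have h1 := congrFun (Γ.nabla_leibniz X f (tapp A Y)) y
  have h2 := congrFun (Γ.nabla_leibniz X f Y) y
  rw [h1, h2]
  simp only [map_add, map_smul, smul_sub, tapp]
  abel

lemma covDer_congr_right {Y Y' : M → V} (X : M → V) (x : M) (hy : Y x = Y' x) :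
    covDer Γ A X Y x = covDer Γ A X Y' x :=
  tens_congr (T := fun W => covDer Γ A X W) (covDer_add_right Γ A X)
    (covDer_smulfun_right Γ A X) x hy

lemma covDer_zero_right (X : M → V) (x : M) :
    covDer Γ A X (fun _ => (0:V)) x = 0 := by
  have h := covDer_smulfun_right Γ A X (fun _ => (0:ℝ)) (fun _ => (0:V))
  have := congrFun h x
  simp only [zero_smul] at this
  exact this

end NSCanon
namespace NSCanon
open RGeo

variable {M V : Type} [AddCommGroup V] [Module ℝ V]
variable {Γ : RGeo M V} (S : ACMS Γ) (h : M → V →ₗ[ℝ] V)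

lemma eta_h (hh : S.IsNSTensor h) (x : M) (v : V) : S.eta x (h x v) = 0 := by
  have hgf : (fun y => Γ.g y (S.xi y) (S.xi y)) = fun _ => (1:ℝ) :=
    funext fun y => g_xi_xi S y
  have hc := congrFun (Γ.metric_compat (cst M v) S.xi S.xi) x
  rw [hgf, Γ.D_const] at hc
  rw [hh (cst M v) x] at hc
  simp only [Pi.zero_apply, cst, map_add, map_neg, LinearMap.add_apply, LinearMap.neg_apply,
    g_xi S, g_xi' S, eta_phi S] at hc
  linarith

lemma cov_X_xi (hh : S.IsNSTensor h) (X : M → V) (x : M) :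
    covDer Γ S.phi X S.xi x = S.phi x (S.phi x (X x)) - S.phi x (h x (X x)) := by
  have h0 : tapp S.phi S.xi = fun _ => (0:V) := funext fun y => phi_xi S y
  simp only [covDer, h0, nabla_zero_right]
  rw [hh X x]
  simp only [map_add, map_neg]
  abel

lemma cov_xi_X (hNS : S.IsNearlySasakian) (hh : S.IsNSTensor h) (X : M → V) (x : M) :
    covDer Γ S.phi S.xi X x = S.phi x (h x (X x)) := by
  have h1 := hNS S.xi X x
  have h2 := cov_X_xi S h hh X x
  have hA : covDer Γ S.phi S.xi X x
      = (2 * Γ.g x (S.xi x) (X x)) • S.xi x - S.eta x (S.xi x) • X x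
        - S.eta x (X x) • S.xi x - covDer Γ S.phi X S.xi x := by
    rw [← h1]; abel
  rw [hA, h2, S.eta_xi, g_xi' S, S.phi_sq]
  module

lemma h_xi (hNS : S.IsNearlySasakian) (hh : S.IsNSTensor h) (x : M) :
    h x (S.xi x) = 0 := by
  have h2 := cov_X_xi S h hh S.xi x
  have h3 := cov_xi_X S h hNS hh S.xi x
  rw [phi_phi_xi S] at h2
  rw [h2] at h3
  have h4 : S.phi x (h x (S.xi x)) = 0 := by
    have h5 : (2:ℝ) • S.phi x (h x (S.xi x)) = 0 := by
      rw [two_smul]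
      nth_rewrite 1 [← h3]
      abel
    have h6 : S.phi x (h x (S.xi x)) = (1/2 : ℝ) • ((2:ℝ) • S.phi x (h x (S.xi x))) := by
      rw [smul_smul]; norm_num
    rw [h6, h5, smul_zero]
  have h7 := S.phi_sq x (h x (S.xi x))
  rw [h4, map_zero, eta_h S h hh, zero_smul, add_zero] at h7
  exact (neg_eq_zero.mp h7.symm)

lemma D_negf (X : M → V) (f : M → ℝ) (x : M) :
    Γ.D X (fun y => -(f y)) x = -(Γ.D X f x) := by
  have e0 : (fun y => -(f y)) = (fun _ => (-1:ℝ)) * f := by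
    funext y; simp [Pi.mul_apply]
  rw [e0]
  have e5 := congrFun (Γ.D_mul_fun X (fun _ => (-1:ℝ)) f) x
  rw [Γ.D_const] at e5
  rw [e5]
  simp [Pi.mul_apply]

lemma cov_skew (X Y Z : M → V) (x : M) :
    Γ.g x (covDer Γ S.phi X Y x) (Z x) = -Γ.g x (Y x) (covDer Γ S.phi X Z x) := by
  have e1 := congrFun (Γ.metric_compat X (tapp S.phi Y) Z) x
  have e2 := congrFun (Γ.metric_compat X Y (tapp S.phi Z)) x
  have e3 : (fun y => Γ.g y (tapp S.phi Y y) (Z y))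
      = fun y => -(Γ.g y (Y y) (tapp S.phi Z y)) := by
    funext y; simp only [tapp]; rw [phi_skew S]
  have e4 : Γ.D X (fun y => Γ.g y (tapp S.phi Y y) (Z y)) x
      = -(Γ.D X (fun y => Γ.g y (Y y) (tapp S.phi Z y)) x) := by
    rw [e3]; exact D_negf X _ x
  have p1 : Γ.g x (S.phi x (Γ.nabla X Y x)) (Z x)
      = -(Γ.g x (Γ.nabla X Y x) (S.phi x (Z x))) := phi_skew S x _ _
  have p2 : Γ.g x (S.phi x (Y x)) (Γ.nabla X Z x)
      = -(Γ.g x (Y x) (S.phi x (Γ.nabla X Z x))) := phi_skew S x _ _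
  simp only [covDer, tapp, map_sub, LinearMap.sub_apply] at e1 e2 e4 ⊢
  linear_combination -e1 + e4 - e2 - p1 - p2

lemma identity_I (hh : S.IsNSTensor h) (X Y : M → V) (x : M) :
    covDer Γ S.phi X (tapp S.phi Y) x + S.phi x (covDer Γ S.phi X Y x)
      = (Γ.g x (h x (X x) - S.phi x (X x)) (Y x)) • S.xi x
        + (S.eta x (Y x)) • (h x (X x) - S.phi x (X x)) := by
  have hsq : tapp S.phi (tapp S.phi Y)
      = fun y => ((-1:ℝ) • Y y) + ((S.eta y (Y y)) • S.xi y) := by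
    funext y; simp only [tapp]; rw [S.phi_sq]; module
  have h1 : Γ.nabla X (tapp S.phi (tapp S.phi Y)) x
      = (-1:ℝ) • Γ.nabla X Y x + (Γ.D X (fun y => S.eta y (Y y)) x) • S.xi x
        + (S.eta x (Y x)) • Γ.nabla X S.xi x := by
    rw [hsq]
    have h2 := nabla_add_right' Γ X (fun y => (-1:ℝ) • Y y)
      (fun y => (S.eta y (Y y)) • S.xi y) x
    rw [h2, congrFun (nabla_csmul_right Γ X Y (-1)) x,
        congrFun (Γ.nabla_leibniz X (fun y => S.eta y (Y y)) S.xi) x]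
    abel
  have hDeta : Γ.D X (fun y => S.eta y (Y y)) x
      = Γ.g x (Γ.nabla X S.xi x) (Y x) + S.eta x (Γ.nabla X Y x) := by
    have heq : (fun y => S.eta y (Y y)) = fun y => Γ.g y (S.xi y) (Y y) := by
      funext y; rw [g_xi' S]
    rw [heq, congrFun (Γ.metric_compat X S.xi Y) x, g_xi' S]
  simp only [covDer, map_sub]
  rw [h1, hDeta, hh X x, S.phi_sq]
  have hg : Γ.g x (-(S.phi x (X x)) + h x (X x)) (Y x)
      = Γ.g x (h x (X x) - S.phi x (X x)) (Y x) := by rw [neg_add_eq_sub]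
  rw [hg]
  simp only [map_sub, LinearMap.sub_apply]
  module

lemma phi_h_phi (hNS : S.IsNearlySasakian) (hh : S.IsNSTensor h) (x : M) (v : V) :
    S.phi x (h x (S.phi x v)) = h x v := by
  have h6 := identity_I S h hh S.xi (cst M v) x
  have c1 : covDer Γ S.phi S.xi (tapp S.phi (cst M v)) x = S.phi x (h x (S.phi x v)) :=
    cov_xi_X S h hNS hh (tapp S.phi (cst M v)) x
  have c2 : covDer Γ S.phi S.xi (cst M v) x = S.phi x (h x v) :=
    cov_xi_X S h hNS hh (cst M v) x
  rw [c1, c2, h_xi S h hNS hh, phi_xi S] at h6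
  simp only [sub_zero, sub_self, map_zero, zero_smul, smul_zero, add_zero, cst, LinearMap.zero_apply] at h6
  have h7 := S.phi_sq x (h x v)
  rw [eta_h S h hh, zero_smul, add_zero] at h7
  rw [h7] at h6
  linear_combination (norm := module) h6

lemma h_phi (hNS : S.IsNearlySasakian) (hh : S.IsNSTensor h) (x : M) (v : V) :
    h x (S.phi x v) = -(S.phi x (h x v)) := by
  have h1 := congrArg (S.phi x) (phi_h_phi S h hNS hh x v)
  rw [S.phi_sq, eta_h S h hh, zero_smul, add_zero] at h1
  linear_combination (norm := module) -h1

lemma h_skew (hNS : S.IsNearlySasakian) (hh : S.IsNSTensor h) (x : M) (v w : V) :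
    Γ.g x (h x v) w = -(Γ.g x v (h x w)) := by
  have hC : ∀ a b : V, Γ.g x (S.phi x (h x a)) b = -(Γ.g x a (S.phi x (h x b))) := by
    intro a b
    have hcs := cov_skew S S.xi (cst M a) (cst M b) x
    rw [cov_xi_X S h hNS hh (cst M a) x, cov_xi_X S h hNS hh (cst M b) x] at hcs
    exact hcs
  have h1 : Γ.g x (h x v) w = Γ.g x (S.phi x (h x (S.phi x v))) w := by
    rw [phi_h_phi S h hNS hh]
  have h2 := S.metric_phi x v (h x w)
  rw [eta_h S h hh] at h2
  rw [h1, hC (S.phi x v) w]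
  linarith [h2]
end NSCanon
namespace NSCanon
open RGeo

variable {M V : Type} [AddCommGroup V] [Module ℝ V]

lemma tapp_apply (A : M → V →ₗ[ℝ] V) (X : M → V) (x : M) :
    tapp A X x = A x (X x) := rfl

variable {Γ : RGeo M V}

lemma covDer_add_left (A : M → V →ₗ[ℝ] V) (X X' Y : M → V) (x : M) :
    covDer Γ A (X + X') Y x = covDer Γ A X Y x + covDer Γ A X' Y x := by
  simp only [covDer]
  rw [congrFun (Γ.nabla_add_left X X' (tapp A Y)) x, congrFun (Γ.nabla_add_left X X' Y) x]
  simp only [Pi.add_apply, map_add]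
  abel

lemma covDer_smul_left (A : M → V →ₗ[ℝ] V) (f : M → ℝ) (X Y : M → V) (x : M) :
    covDer Γ A (fun y => f y • X y) Y x = f x • covDer Γ A X Y x := by
  simp only [covDer]
  rw [congrFun (Γ.nabla_smul_left f X (tapp A Y)) x, congrFun (Γ.nabla_smul_left f X Y) x]
  simp only [map_smul, smul_sub]

variable (S : ACMS Γ) (h : M → V →ₗ[ℝ] V)

lemma phi_phi_fun (Y : M → V) :
    tapp S.phi (tapp S.phi Y)
      = (fun y => (-1:ℝ) • Y y) + (fun y => (S.eta y (Y y)) • S.xi y) := by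
  funext y
  simp only [tapp, Pi.add_apply]
  rw [S.phi_sq]
  module

lemma identity_I_g (hh : S.IsNSTensor h) (X Y : M → V) (x : M) (c : V) :
    Γ.g x (covDer Γ S.phi X (tapp S.phi Y) x) c
      + Γ.g x (S.phi x (covDer Γ S.phi X Y x)) c
      = (Γ.g x (h x (X x) - S.phi x (X x)) (Y x)) * S.eta x c
        + (S.eta x (Y x)) * Γ.g x (h x (X x) - S.phi x (X x)) c := by
  have hI := congrArg (fun w => Γ.g x w c) (identity_I S h hh X Y x)
  simp only [map_add, map_smul, LinearMap.add_apply, LinearMap.smul_apply,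
    smul_eq_mul, g_xi' S] at hI
  linarith [hI]

/-- The candidate canonical connection, as a raw formula. -/
def nbF (S : ACMS Γ) (h : M → V →ₗ[ℝ] V) (r : ℝ) (X Y : M → V) : M → V := fun x =>
  Γ.nabla X Y x
    + (1 / 2 : ℝ) • covDer Γ S.phi X (tapp S.phi Y) x
    - (r * S.eta x (X x)) • S.phi x (Y x)
    + S.eta x (Y x) • (S.phi x (X x) - h x (X x))
    - (1 / 2 * Γ.g x (S.phi x (X x) - h x (X x)) (Y x)) • S.xi x

variable (r : ℝ)

lemma nbF_add_left (X X' Y : M → V) :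
    nbF S h r (X + X') Y = nbF S h r X Y + nbF S h r X' Y := by
  funext x
  simp only [nbF, Pi.add_apply, congrFun (Γ.nabla_add_left X X' Y) x,
    covDer_add_left, map_add, map_sub, LinearMap.add_apply, LinearMap.sub_apply]
  module

lemma nbF_smul_left (f : M → ℝ) (X Y : M → V) :
    nbF S h r (fun y => f y • X y) Y = fun x => f x • nbF S h r X Y x := by
  funext x
  simp only [nbF, congrFun (Γ.nabla_smul_left f X Y) x,
    covDer_smul_left, map_smul, map_sub, LinearMap.smul_apply, LinearMap.sub_apply, smul_eq_mul]
  module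

lemma nbF_add_right (X Y Z : M → V) :
    nbF S h r X (Y + Z) = nbF S h r X Y + nbF S h r X Z := by
  funext x
  have ht : tapp S.phi (Y + Z) = tapp S.phi Y + tapp S.phi Z := by
    funext y; simp [tapp]
  simp only [nbF, Pi.add_apply, congrFun (Γ.nabla_add_right X Y Z) x, ht,
    congrFun (covDer_add_right Γ S.phi X (tapp S.phi Y) (tapp S.phi Z)) x,
    map_add, map_sub, LinearMap.add_apply, LinearMap.sub_apply]
  module

lemma nbF_leibniz (X : M → V) (f : M → ℝ) (Y : M → V) :
    nbF S h r X (fun x => f x • Y x)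
      = fun x => Γ.D X f x • Y x + f x • nbF S h r X Y x := by
  funext x
  have ht : tapp S.phi (fun y => f y • Y y) = fun y => f y • tapp S.phi Y y := by
    funext y; simp [tapp]
  simp only [nbF, congrFun (Γ.nabla_leibniz X f Y) x, ht,
    congrFun (covDer_smulfun_right Γ S.phi X f (tapp S.phi Y)) x,
    map_smul, map_sub, LinearMap.smul_apply, LinearMap.sub_apply, smul_eq_mul]
  module

/-- The canonical connection. -/
def Cbar : ConnOf Γ where
  nb := nbF S h r
  nb_add_left := nbF_add_left S h r
  nb_smul_left := nbF_smul_left S h r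
  nb_add_right := nbF_add_right S h r
  nb_leibniz := nbF_leibniz S h r

lemma Cbar_nb (X Y : M → V) (x : M) : (Cbar S h r).nb X Y x = nbF S h r X Y x := rfl

end NSCanon
namespace NSCanon
open RGeo

variable {M V : Type} [AddCommGroup V] [Module ℝ V]
variable {Γ : RGeo M V} (S : ACMS Γ) (h : M → V →ₗ[ℝ] V) (r : ℝ)

lemma par_g (hh : S.IsNSTensor h) (X Y Z : M → V) :
    Γ.D X (Γ.gf Y Z)
      = fun x => Γ.g x (nbF S h r X Y x) (Z x) + Γ.g x (Y x) (nbF S h r X Z x) := by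
  funext x
  have hmc := congrFun (Γ.metric_compat X Y Z) x
  have hI := identity_I_g S h hh X Y x (Z x)
  have h5 := cov_skew S X Y (tapp S.phi Z) x
  have p0 := phi_skew S x (covDer Γ S.phi X Y x) (Z x)
  have p1 := phi_skew S x (Y x) (Z x)
  have s1 := Γ.g_symm x (Y x) (S.phi x (X x))
  have s2 := Γ.g_symm x (Y x) (h x (X x))
  have hgf : Γ.gf Y Z = fun y => Γ.g y (Y y) (Z y) := rfl
  rw [hgf, hmc]
  simp only [nbF, tapp_apply, map_add, map_sub, map_smul, LinearMap.add_apply,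
    LinearMap.sub_apply, LinearMap.smul_apply, smul_eq_mul, g_xi S, g_xi' S,
    eta_phi S] at hI h5 p0 p1 ⊢
  linear_combination (-(1/2)) * hI + (1/2) * p0 - (1/2) * h5
    + (r * S.eta x (X x)) * p1 - (S.eta x (Z x)) * s1 + (S.eta x (Z x)) * s2

lemma par_xi (hNS : S.IsNearlySasakian) (hh : S.IsNSTensor h) (X : M → V) (x : M) :
    nbF S h r X S.xi x = 0 := by
  have h0 : tapp S.phi S.xi = fun _ => (0:V) := funext fun y => phi_xi S y
  have hg : Γ.g x (S.phi x (X x) - h x (X x)) (S.xi x) = 0 := by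
    simp [map_sub, LinearMap.sub_apply, g_xi S, eta_phi S, eta_h S h hh]
  simp only [nbF, h0, covDer_zero_right, hh X x, S.eta_xi, phi_xi S, hg]
  module

lemma par_phi (hNS : S.IsNearlySasakian) (hh : S.IsNSTensor h) (X Y : M → V) (x : M) :
    nbF S h r X (tapp S.phi Y) x = S.phi x (nbF S h r X Y x) := by
  have e1 : Γ.nabla X (tapp S.phi Y) x
      = covDer Γ S.phi X Y x + S.phi x (Γ.nabla X Y x) := by
    simp only [covDer]; abel
  have e2 : covDer Γ S.phi X (tapp S.phi (tapp S.phi Y)) x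
      = (-1:ℝ) • covDer Γ S.phi X Y x
        + (S.eta x (Y x)) • (S.phi x (S.phi x (X x)) - S.phi x (h x (X x))) := by
    have ha : covDer Γ S.phi X (fun y => (-1:ℝ) • Y y) x
        = (-1:ℝ) • covDer Γ S.phi X Y x :=
      congrFun (covDer_smulfun_right Γ S.phi X (fun _ => (-1:ℝ)) Y) x
    have hb : covDer Γ S.phi X (fun y => (S.eta y (Y y)) • S.xi y) x
        = (S.eta x (Y x)) • covDer Γ S.phi X S.xi x :=
      congrFun (covDer_smulfun_right Γ S.phi X (fun y => S.eta y (Y y)) S.xi) x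
    rw [phi_phi_fun S Y,
      congrFun (covDer_add_right Γ S.phi X (fun y => (-1:ℝ) • Y y)
        (fun y => (S.eta y (Y y)) • S.xi y)) x]
    simp only [Pi.add_apply]
    rw [ha, hb, cov_X_xi S h hh X x]
  have e3 := identity_I S h hh X (tapp S.phi Y) x
  -- φ(cov X (tapp φ Y)) = RHS − cov X (tapp φ (tapp φ Y))
  simp only [nbF, tapp_apply, eta_phi S] at e3 ⊢
  rw [e1, e2]
  rw [e2] at e3
  -- expand scalars
  simp only [map_sub, map_add, map_smul, LinearMap.sub_apply, LinearMap.add_apply,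
    LinearMap.smul_apply, smul_eq_mul, zero_smul, smul_zero, add_zero, phi_xi S] at e3 ⊢
  linear_combination (norm := module) (-(1/2) : ℝ) • e3

lemma par_eta (hNS : S.IsNearlySasakian) (hh : S.IsNSTensor h) (X Y : M → V) :
    Γ.D X (S.etaf Y) = fun x => S.eta x (nbF S h r X Y x) := by
  have heq : S.etaf Y = Γ.gf S.xi Y := by
    funext y; simp [ACMS.etaf, gf, g_xi' S]
  rw [heq, par_g S h r hh X S.xi Y]
  funext x
  rw [par_xi S h r hNS hh X x]
  simp [g_xi' S]

lemma tors_formula (X Y : M → V) (x : M) :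
    (Cbar S h r).tors X Y x =
      ((1/2:ℝ) • covDer Γ S.phi X (tapp S.phi Y) x
        - (r * S.eta x (X x)) • S.phi x (Y x)
        + S.eta x (Y x) • (S.phi x (X x) - h x (X x))
        - (1/2 * Γ.g x (S.phi x (X x) - h x (X x)) (Y x)) • S.xi x)
      - ((1/2:ℝ) • covDer Γ S.phi Y (tapp S.phi X) x
        - (r * S.eta x (Y x)) • S.phi x (X x)
        + S.eta x (X x) • (S.phi x (Y x) - h x (Y x))
        - (1/2 * Γ.g x (S.phi x (Y x) - h x (Y x)) (X x)) • S.xi x) := by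
  have hlie : Γ.lie X Y x = Γ.nabla X Y x - Γ.nabla Y X x :=
    (congrFun (Γ.torsion_free X Y) x).symm
  simp only [ConnOf.tors, Cbar, nbF, hlie]
  abel

lemma F_skew23 (hh : S.IsNSTensor h) (X Y Z : M → V) (x : M)
    (hY : S.eta x (Y x) = 0) (hZ : S.eta x (Z x) = 0) :
    Γ.g x (covDer Γ S.phi X (tapp S.phi Y) x) (Z x)
      = - Γ.g x (covDer Γ S.phi X (tapp S.phi Z) x) (Y x) := by
  have a := cov_skew S X (tapp S.phi Y) Z x
  have b := phi_skew S x (Y x) (covDer Γ S.phi X Z x)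
  have c := congrArg (fun w => Γ.g x w (Y x)) (identity_I S h hh X Z x)
  have sy1 := Γ.g_symm x (Y x) (S.phi x (covDer Γ S.phi X Z x))
  simp only [map_add, map_smul, LinearMap.add_apply, LinearMap.smul_apply,
    smul_eq_mul, tapp_apply, g_xi' S, hY, hZ, mul_zero, zero_mul, add_zero] at a c
  linear_combination a - b + c + sy1

lemma F_cross (hNS : S.IsNearlySasakian) (X Y Z : M → V) (x : M)
    (hY : S.eta x (Y x) = 0) (hZ : S.eta x (Z x) = 0) :
    Γ.g x (covDer Γ S.phi Y (tapp S.phi X) x) (Z x)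
      = - Γ.g x (covDer Γ S.phi Z (tapp S.phi X) x) (Y x) := by
  have n1 := congrArg (fun w => Γ.g x w (Z x)) (hNS Y (tapp S.phi X) x)
  have n2 := congrArg (fun w => Γ.g x w (Y x)) (hNS Z (tapp S.phi X) x)
  have sk := cov_skew S (tapp S.phi X) Y Z x
  have sy := Γ.g_symm x (Y x) (covDer Γ S.phi (tapp S.phi X) Z x)
  simp only [map_add, map_sub, map_smul, LinearMap.add_apply, LinearMap.sub_apply,
    LinearMap.smul_apply, smul_eq_mul, tapp_apply, g_xi' S, eta_phi S, hY, hZ,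
    mul_zero, zero_mul, add_zero, sub_zero, zero_sub, neg_zero] at n1 n2
  linear_combination n1 + n2 - sk + sy

lemma tors_skewD (hNS : S.IsNearlySasakian) (hh : S.IsNSTensor h) (X Y Z : M → V)
    (hX : Sect (fun x => LinearMap.ker (S.eta x)) X)
    (hY : Sect (fun x => LinearMap.ker (S.eta x)) Y)
    (hZ : Sect (fun x => LinearMap.ker (S.eta x)) Z) (x : M) :
    Γ.g x ((Cbar S h r).tors X Y x) (Z x)
      = -(Γ.g x ((Cbar S h r).tors X Z x) (Y x)) := by
  have hX' : S.eta x (X x) = 0 := LinearMap.mem_ker.mp (hX x)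
  have hY' : S.eta x (Y x) = 0 := LinearMap.mem_ker.mp (hY x)
  have hZ' : S.eta x (Z x) = 0 := LinearMap.mem_ker.mp (hZ x)
  have fs := F_skew23 S h hh X Y Z x hY' hZ'
  have fc := F_cross S hNS X Y Z x hY' hZ'
  rw [tors_formula, tors_formula]
  simp only [map_add, map_sub, map_smul, LinearMap.add_apply, LinearMap.sub_apply,
    LinearMap.smul_apply, smul_eq_mul, g_xi' S, hX', hY', hZ',
    mul_zero, zero_mul, zero_smul, add_zero, sub_zero]
  linear_combination (1/2) * fs - (1/2) * fc

lemma tors_xi (hNS : S.IsNearlySasakian) (hh : S.IsNSTensor h) (U : M → V) (x : M) :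
    (Cbar S h r).tors S.xi U x
      = (1/2:ℝ) • S.phi x (h x (S.phi x (U x))) - r • S.phi x (U x)
        - (S.phi x (U x) - h x (U x)) := by
  have h0 : tapp S.phi S.xi = fun _ => (0:V) := funext fun y => phi_xi S y
  have hg : Γ.g x (S.phi x (U x) - h x (U x)) (S.xi x) = 0 := by
    simp [map_sub, LinearMap.sub_apply, g_xi S, eta_phi S, eta_h S h hh]
  have hcov : covDer Γ S.phi S.xi (tapp S.phi U) x = S.phi x (h x (S.phi x (U x))) := by
    rw [cov_xi_X S h hNS hh (tapp S.phi U) x, tapp_apply]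
  rw [tors_formula]
  rw [hcov, h0, covDer_zero_right, S.eta_xi, phi_xi S, h_xi S h hNS hh, hg]
  simp only [sub_self, map_zero, LinearMap.zero_apply, smul_zero, zero_smul,
    mul_zero, add_zero, sub_zero]
  module

lemma tau_cond (hNS : S.IsNearlySasakian) (hh : S.IsNSTensor h) (X : M → V) (x : M) :
    (Cbar S h r).tors S.xi (tapp S.phi X) x + S.phi x ((Cbar S h r).tors S.xi X x)
      = (-(2 * (r + 1))) • S.phi x (S.phi x (X x)) := by
  rw [tors_xi S h r hNS hh (tapp S.phi X) x, tors_xi S h r hNS hh X x, tapp_apply]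
  have e1 : h x (S.phi x (S.phi x (X x))) = -(h x (X x)) := by
    rw [S.phi_sq]
    simp [map_add, map_smul, h_xi S h hNS hh]
  have e2 : S.phi x (S.phi x (h x (S.phi x (X x)))) = -(h x (S.phi x (X x))) := by
    rw [S.phi_sq, eta_h S h hh, zero_smul, add_zero]
  have e3 : h x (S.phi x (X x)) = -(S.phi x (h x (X x))) := h_phi S h hNS hh x (X x)
  simp only [map_sub, map_smul, map_add, e1, map_neg]
  rw [e2, e3]
  try simp only [map_neg]
  module

theorem cbar_canonical (hNS : S.IsNearlySasakian) (hh : S.IsNSTensor h) :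
    IsCanonicalConn Γ S r (Cbar S h r) := by
  refine ⟨⟨?_, ?_, ?_, ?_⟩, ?_, ?_⟩
  · exact par_g S h r hh
  · exact par_xi S h r hNS hh
  · exact par_phi S h r hNS hh
  · exact par_eta S h r hNS hh
  · exact fun X Y Z hX hY hZ x => tors_skewD S h r hNS hh X Y Z hX hY hZ x
  · exact fun X x => tau_cond S h r hNS hh X x

end NSCanon
namespace NSCanon
open RGeo

variable {M V : Type} [AddCommGroup V] [Module ℝ V]

lemma eq_zero_of_self_add_self {v : V} (hv : v + v = 0) : v = 0 := by
  have h2 : (2:ℝ) • v = 0 := by rw [two_smul]; exact hv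
  have h3 : v = (1/2 : ℝ) • ((2:ℝ) • v) := by rw [smul_smul]; norm_num
  rw [h3, h2, smul_zero]

variable {Γ : RGeo M V}

/-- Abstract elimination of a trilinear structure with the canonical-connection
symmetries. -/
lemma k_vanish (S : ACMS Γ) (x : M) (κ : V → V → V)
    (hadd1 : ∀ a a' b, κ (a + a') b = κ a b + κ a' b)
    (hsmul1 : ∀ (s : ℝ) a b, κ (s • a) b = s • κ a b)
    (hadd2 : ∀ a b b', κ a (b + b') = κ a b + κ a b')
    (hsmul2 : ∀ (s : ℝ) a b, κ a (s • b) = s • κ a b)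
    (hxi1 : ∀ b, κ (S.xi x) b = 0)
    (hxi2 : ∀ a, κ a (S.xi x) = 0)
    (heta : ∀ a b, S.eta x (κ a b) = 0)
    (hskew : ∀ a b c, Γ.g x (κ a b) c = -(Γ.g x (κ a c) b))
    (hphi : ∀ a b, κ a (S.phi x b) = S.phi x (κ a b))
    (hswap : ∀ a b c, S.eta x a = 0 → S.eta x b = 0 → S.eta x c = 0 →
      Γ.g x (κ a b) c = -(Γ.g x (κ c b) a)) :
    ∀ a b, κ a b = 0 := by
  have kR2 : ∀ a b c, Γ.g x (κ a (S.phi x b)) c = -(Γ.g x (κ a b) (S.phi x c)) := by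
    intro a b c
    rw [hphi]
    exact phi_skew S x (κ a b) c
  have R3 : ∀ a b c, S.eta x a = 0 → S.eta x b = 0 → S.eta x c = 0 →
      Γ.g x (κ (S.phi x a) b) c = -(Γ.g x (κ a (S.phi x b)) c) := by
    intro a b c ha hb hc
    have s1 := hswap (S.phi x a) b c (eta_phi S x a) hb hc
    have s2 := kR2 c b a
    have s3 := hswap c (S.phi x b) a hc (eta_phi S x b) ha
    linarith [s1, s2, s3]
  have R4 : ∀ a b c, S.eta x a = 0 → S.eta x b = 0 → S.eta x c = 0 →
      Γ.g x (κ (S.phi x a) b) c = Γ.g x (κ a b) (S.phi x c) := by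
    intro a b c ha hb hc
    have := R3 a b c ha hb hc
    have h2 := kR2 a b c
    linarith
  have R4' : ∀ a b c, S.eta x a = 0 → S.eta x b = 0 → S.eta x c = 0 →
      Γ.g x (κ (S.phi x a) b) c = -(Γ.g x (κ a b) (S.phi x c)) := by
    intro a b c ha hb hc
    have s1 := hskew (S.phi x a) b c
    have s2 := R3 a c b ha hc hb
    have s3 := hskew a (S.phi x c) b
    linarith
  have kphi0 : ∀ a b c, S.eta x a = 0 → S.eta x b = 0 → S.eta x c = 0 →
      Γ.g x (κ a b) (S.phi x c) = 0 := by
    intro a b c ha hb hc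
    have := R4 a b c ha hb hc
    have := R4' a b c ha hb hc
    linarith
  have kD0 : ∀ a b c, S.eta x a = 0 → S.eta x b = 0 → S.eta x c = 0 →
      Γ.g x (κ a b) c = 0 := by
    intro a b c ha hb hc
    have hc2 : c = S.phi x (-(S.phi x c)) := by
      rw [map_neg, S.phi_sq, hc, zero_smul, add_zero]
      exact (neg_neg c).symm
    rw [hc2]
    exact kphi0 a b (-(S.phi x c)) ha hb (by rw [map_neg, eta_phi S, neg_zero])
  -- general vanishing of the scalar form
  have kgen : ∀ a b c, Γ.g x (κ a b) c = 0 := by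
    intro a b c
    have hdeca : a = (a - S.eta x a • S.xi x) + S.eta x a • S.xi x := by module
    have hdecb : b = (b - S.eta x b • S.xi x) + S.eta x b • S.xi x := by module
    have ea : S.eta x (a - S.eta x a • S.xi x) = 0 := by
      simp [map_sub, map_smul, S.eta_xi]
    have eb : S.eta x (b - S.eta x b • S.xi x) = 0 := by
      simp [map_sub, map_smul, S.eta_xi]
    have h1 : κ a b = κ (a - S.eta x a • S.xi x) (b - S.eta x b • S.xi x) := by
      conv_lhs => rw [hdeca, hdecb]
      rw [hadd1, hadd2, hadd2, hsmul1, hsmul2, hsmul2, hxi1, hxi2]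
      rw [hxi2]
      simp
    rw [h1]
    -- decompose c
    have hdecc : c = (c - S.eta x c • S.xi x) + S.eta x c • S.xi x := by module
    have ec : S.eta x (c - S.eta x c • S.xi x) = 0 := by
      simp [map_sub, map_smul, S.eta_xi]
    rw [hdecc, map_add, map_smul]
    rw [kD0 _ _ _ ea eb ec]
    have hxic : Γ.g x (κ (a - S.eta x a • S.xi x) (b - S.eta x b • S.xi x)) (S.xi x) = 0 := by
      rw [g_xi S]; exact heta _ _
    rw [hxic]
    simp
  intro a b
  exact g_zero' Γ (kgen a b (κ a b))

end NSCanon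
namespace NSCanon
open RGeo

variable {M V : Type} [AddCommGroup V] [Module ℝ V]
variable {Γ : RGeo M V}

/-- Difference of two connections. -/
def Kd (C₁ C₂ : ConnOf Γ) (X Y : M → V) : M → V := fun x => C₁.nb X Y x - C₂.nb X Y x

variable (C₁ C₂ : ConnOf Γ)

lemma Kd_add_right (X Y Z : M → V) : Kd C₁ C₂ X (Y + Z) = Kd C₁ C₂ X Y + Kd C₁ C₂ X Z := by
  funext y
  simp only [Kd, congrFun (C₁.nb_add_right X Y Z) y, congrFun (C₂.nb_add_right X Y Z) y,
    Pi.add_apply]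
  abel

lemma Kd_smul_right (X : M → V) (f : M → ℝ) (Y : M → V) :
    Kd C₁ C₂ X (fun y => f y • Y y) = fun y => f y • Kd C₁ C₂ X Y y := by
  funext y
  simp only [Kd, congrFun (C₁.nb_leibniz X f Y) y, congrFun (C₂.nb_leibniz X f Y) y]
  module

lemma Kd_add_left (X X' Y : M → V) : Kd C₁ C₂ (X + X') Y = Kd C₁ C₂ X Y + Kd C₁ C₂ X' Y := by
  funext y
  simp only [Kd, congrFun (C₁.nb_add_left X X' Y) y, congrFun (C₂.nb_add_left X X' Y) y,
    Pi.add_apply]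
  abel

lemma Kd_smul_left (f : M → ℝ) (X Y : M → V) :
    Kd C₁ C₂ (fun y => f y • X y) Y = fun y => f y • Kd C₁ C₂ X Y y := by
  funext y
  simp only [Kd, congrFun (C₁.nb_smul_left f X Y) y, congrFun (C₂.nb_smul_left f X Y) y]
  module

lemma Kd_congr (X Y : M → V) (x : M) :
    Kd C₁ C₂ X Y x = Kd C₁ C₂ (cst M (X x)) (cst M (Y x)) x := by
  have h1 : Kd C₁ C₂ X Y x = Kd C₁ C₂ (cst M (X x)) Y x := by
    simp only [Kd]
    rw [nb_congr_left Γ C₁ Y x (show X x = (cst M (X x)) x from rfl),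
        nb_congr_left Γ C₂ Y x (show X x = (cst M (X x)) x from rfl)]
  have h2 : Kd C₁ C₂ (cst M (X x)) Y x = Kd C₁ C₂ (cst M (X x)) (cst M (Y x)) x :=
    tens_congr (T := Kd C₁ C₂ (cst M (X x))) (Kd_add_right C₁ C₂ (cst M (X x)))
      (Kd_smul_right C₁ C₂ (cst M (X x))) x rfl
  rw [h1, h2]

theorem canonical_unique (S : ACMS Γ) (h : M → V →ₗ[ℝ] V) (r : ℝ)
    (hNS : S.IsNearlySasakian) (hh : S.IsNSTensor h)
    (hc₁ : IsCanonicalConn Γ S r C₁) (hc₂ : IsCanonicalConn Γ S r C₂) :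
    ∀ (X Y : M → V) (x : M), C₁.nb X Y x = C₂.nb X Y x := by
  obtain ⟨⟨m₁, x₁, p₁, e₁⟩, sk₁, τ₁⟩ := hc₁
  obtain ⟨⟨m₂, x₂, p₂, e₂⟩, sk₂, τ₂⟩ := hc₂
  have u1 : ∀ (X Y Z : M → V) (xx : M),
      Γ.g xx (Kd C₁ C₂ X Y xx) (Z xx) + Γ.g xx (Y xx) (Kd C₁ C₂ X Z xx) = 0 := by
    intro X Y Z xx
    have a := congrFun (m₁ X Y Z) xx
    have b := congrFun (m₂ X Y Z) xx
    simp only [Kd, map_sub, LinearMap.sub_apply]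
    linarith [a, b]
  have u2 : ∀ (X : M → V) (xx : M), Kd C₁ C₂ X S.xi xx = 0 := by
    intro X xx
    simp [Kd, x₁ X xx, x₂ X xx]
  have u3 : ∀ (X Y : M → V) (xx : M),
      Kd C₁ C₂ X (tapp S.phi Y) xx = S.phi xx (Kd C₁ C₂ X Y xx) := by
    intro X Y xx
    simp only [Kd, p₁ X Y xx, p₂ X Y xx, map_sub]
  have etaK : ∀ (X Y : M → V) (xx : M), S.eta xx (Kd C₁ C₂ X Y xx) = 0 := by
    intro X Y xx
    have hu := u1 X Y S.xi xx
    rw [u2 X xx] at hu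
    rw [map_zero, add_zero, g_xi S] at hu
    exact hu
  have tdiff : ∀ (X Y : M → V) (xx : M),
      C₁.tors X Y xx - C₂.tors X Y xx = Kd C₁ C₂ X Y xx - Kd C₁ C₂ Y X xx := by
    intro X Y xx
    simp only [ConnOf.tors, Kd]
    abel
  have u4 : ∀ (U : M → V) (xx : M), Kd C₁ C₂ S.xi U xx = 0 := by
    intro U xx
    have t1 := τ₁ U xx
    have t2 := τ₂ U xx
    have hstep : (C₁.tors S.xi (tapp S.phi U) xx - C₂.tors S.xi (tapp S.phi U) xx)
        + S.phi xx (C₁.tors S.xi U xx - C₂.tors S.xi U xx) = 0 := by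
      rw [map_sub]
      linear_combination (norm := module) t1 - t2
    rw [tdiff, tdiff, u2, u2, sub_zero, sub_zero, u3] at hstep
    have h5 : S.phi xx (Kd C₁ C₂ S.xi U xx) = 0 := eq_zero_of_self_add_self hstep
    have h6 := S.phi_sq xx (Kd C₁ C₂ S.xi U xx)
    rw [h5, map_zero, etaK, zero_smul, add_zero] at h6
    exact (neg_eq_zero.mp h6.symm)
  -- pointwise trilinear elimination
  intro X Y x
  have key : ∀ a b : V, Kd C₁ C₂ (cst M a) (cst M b) x = 0 := by
    apply k_vanish S x (fun a b => Kd C₁ C₂ (cst M a) (cst M b) x)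
    · -- hadd1
      intro a a' b
      have : cst M (a + a') = (cst M a) + (cst M a') := rfl
      rw [this, congrFun (Kd_add_left C₁ C₂ (cst M a) (cst M a') (cst M b)) x]
      rfl
    · -- hsmul1
      intro s a b
      have : cst M (V := V) (s • a) = fun y => (fun _ => s) y • (cst M a) y := rfl
      rw [this, congrFun (Kd_smul_left C₁ C₂ (fun _ => s) (cst M a) (cst M b)) x]
    · -- hadd2
      intro a b b'
      have : cst M (b + b') = (cst M b) + (cst M b') := rfl
      rw [this, congrFun (Kd_add_right C₁ C₂ (cst M a) (cst M b) (cst M b')) x]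
      rfl
    · -- hsmul2
      intro s a b
      have : cst M (V := V) (s • b) = fun y => (fun _ => s) y • (cst M b) y := rfl
      rw [this, congrFun (Kd_smul_right C₁ C₂ (cst M a) (fun _ => s) (cst M b)) x]
    · -- hxi1
      intro b
      have h1 : Kd C₁ C₂ (cst M (S.xi x)) (cst M b) x = Kd C₁ C₂ S.xi (cst M b) x := by
        simp only [Kd]
        rw [nb_congr_left Γ C₁ (cst M b) x (show (cst M (S.xi x)) x = S.xi x from rfl),
            nb_congr_left Γ C₂ (cst M b) x (show (cst M (S.xi x)) x = S.xi x from rfl)]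
      rw [h1, u4]
    · -- hxi2
      intro a
      have h1 : Kd C₁ C₂ (cst M a) (cst M (S.xi x)) x = Kd C₁ C₂ (cst M a) S.xi x :=
        tens_congr (T := Kd C₁ C₂ (cst M a)) (Kd_add_right C₁ C₂ (cst M a))
          (Kd_smul_right C₁ C₂ (cst M a)) x rfl
      rw [h1, u2]
    · -- heta
      intro a b
      exact etaK (cst M a) (cst M b) x
    · -- hskew
      intro a b c
      have hu := u1 (cst M a) (cst M b) (cst M c) x
      have hs := Γ.g_symm x (cst M b x) (Kd C₁ C₂ (cst M a) (cst M c) x)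
      simp only [cst] at hu hs ⊢
      linarith [hu, hs]
    · -- hphi
      intro a b
      have h1 : Kd C₁ C₂ (cst M a) (cst M (S.phi x b)) x
          = Kd C₁ C₂ (cst M a) (tapp S.phi (cst M b)) x :=
        tens_congr (T := Kd C₁ C₂ (cst M a)) (Kd_add_right C₁ C₂ (cst M a))
          (Kd_smul_right C₁ C₂ (cst M a)) x rfl
      rw [h1, u3]
    · -- hswap
      intro a b c ha hb hc
      -- sections of the distribution through a, b, c
      have hsect : ∀ v : V, Sect (fun y => LinearMap.ker (S.eta y))
          (fun y => v - (S.eta y v) • S.xi y) := by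
        intro v y
        simp [LinearMap.mem_ker, map_sub, map_smul, S.eta_xi]
      have hval : ∀ v : V, S.eta x v = 0 → (fun y => v - (S.eta y v) • S.xi y) x = v := by
        intro v hv; simp [hv]
      set Pa : M → V := fun y => a - (S.eta y a) • S.xi y with hPa
      set Pb : M → V := fun y => b - (S.eta y b) • S.xi y with hPb
      set Pc : M → V := fun y => c - (S.eta y c) • S.xi y with hPc
      have s1 := sk₁ Pb Pa Pc (hsect b) (hsect a) (hsect c) x
      have s2 := sk₂ Pb Pa Pc (hsect b) (hsect a) (hsect c) x
      have d1 := congrArg (fun w => Γ.g x w (Pc x)) (tdiff Pb Pa x)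
      have d2 := congrArg (fun w => Γ.g x w (Pa x)) (tdiff Pb Pc x)
      simp only [map_sub, LinearMap.sub_apply] at d1 d2
      -- translate Kd at section fields to κ
      have ka : Pa x = a := hval a ha
      have kb : Pb x = b := hval b hb
      have kc : Pc x = c := hval c hc
      have tr : ∀ (W W' : M → V), Kd C₁ C₂ W W' x
          = Kd C₁ C₂ (cst M (W x)) (cst M (W' x)) x := fun W W' => Kd_congr C₁ C₂ W W' x
      rw [tr Pb Pa, tr Pa Pb, ka, kb] at d1
      rw [tr Pb Pc, tr Pc Pb, kb, kc] at d2
      rw [ka, kc] at s1 s2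
      rw [kc] at d1
      rw [ka] at d2
      have hk1 := u1 (cst M b) (cst M a) (cst M c) x
      have hs1 := Γ.g_symm x (cst M a x) (Kd C₁ C₂ (cst M b) (cst M c) x)
      simp only [cst] at hk1 hs1 ⊢
      linarith [s1, s2, d1, d2, hk1, hs1]
  have hfin := key (X x) (Y x)
  rw [← Kd_congr C₁ C₂ X Y x] at hfin
  have : C₁.nb X Y x - C₂.nb X Y x = 0 := hfin
  exact sub_eq_zero.mp this

end NSCanon

namespace NSCanon
open RGeo

variable {M V : Type} [AddCommGroup V] [Module ℝ V] {Γ : RGeo M V}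

lemma connOf_ext {C C' : ConnOf Γ} (hnb : C.nb = C'.nb) : C = C' := by
  cases C; cases C'; cases hnb; rfl

end NSCanon

open RGeo in
/-- Theorem.  On a nearly Sasakian manifold, for each real
number `r` there is a unique linear connection `∇̄` parallelizing all the
structure tensors, with torsion totally skew-symmetric on `D = ker η` and with
`τφ + φτ = −2(r+1)φ²`; it is given by `∇̄_X Y = ∇_X Y + H(X,Y)` with
`H(X,Y) = ½(∇_Xφ)φY − rη(X)φY + η(Y)(φ−h)X − ½g((φ−h)X,Y)ξ`. -/
theorem nearlySasakian_canonical_connection {M V : Type}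
    [AddCommGroup V] [Module ℝ V]
    (Γ : RGeo M V) (S : ACMS Γ) (h : M → V →ₗ[ℝ] V)
    (hNS : S.IsNearlySasakian) (hh : S.IsNSTensor h) (r : ℝ) :
    (∃! C : ConnOf Γ, IsCanonicalConn Γ S r C) ∧
    (∀ C : ConnOf Γ, IsCanonicalConn Γ S r C → ∀ X Y : M → V, ∀ x,
      C.nb X Y x = Γ.nabla X Y x
        + (1 / 2 : ℝ) • covDer Γ S.phi X (tapp S.phi Y) x
        - (r * S.eta x (X x)) • S.phi x (Y x)
        + S.eta x (Y x) • (S.phi x (X x) - h x (X x))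
        - (1 / 2 * Γ.g x (S.phi x (X x) - h x (X x)) (Y x)) • S.xi x) := by
  have hb := NSCanon.cbar_canonical S h r hNS hh
  have huniq : ∀ C : ConnOf Γ, IsCanonicalConn Γ S r C →
      ∀ X Y x, C.nb X Y x = (NSCanon.Cbar S h r).nb X Y x :=
    fun C hC => NSCanon.canonical_unique C (NSCanon.Cbar S h r) S h r hNS hh hC hb
  constructor
  · refine ⟨NSCanon.Cbar S h r, hb, ?_⟩
    intro C hC
    apply NSCanon.connOf_ext
    funext X Y x
    exact huniq C hC X Y x
  · intro C hC X Y x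
    exact huniq C hC X Y x
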